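/- (Non-homogeneous dyadic Journé lemma) Let μ = μ_n × μ_m be an arbitrary product of Borel measures on ℝⁿ and ℝᵐ, D = D_n × D_m a product dyadic system, and Ω ⊂ ℝ^{n+m} a set with μ(Ω) < ∞ such that every x ∈ Ω lies in some R ∈ D with R ⊂ Ω. Let Ω̃ := {M χ_Ω > 1/2} with M the strong dyadic maximal operator, and for R ∈ D define emb₁(R;Ω) := sup{k : R^{(k,0)} ⊂ Ω̃}, where R^{(k,0)} := I^{(k)} × J for R = I × J. Call R = I × J ⊂ Ω 2-maximal if I × J̃ ⊄ Ω for every dyadic J̃ ⊋ J. Then for any decreasing ω: ℕ → ℝ₊ with Σ_{k≥0} ω(k) < ∞: Σ_{R ⊂ Ω, 2-maximal} ω(emb₁(R;Ω)) μ(R) ≤ 2 (Σ_{k=0}^∞ ω(k)) μ(Ω). -/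

import Mathlib

open MeasureTheory Set

/-- The standard dyadic cube of generation `k` (side length `2^{-k}`) at
position `j` in `ℝⁿ`: `∏_d [j_d 2^{-k}, (j_d+1) 2^{-k})`. -/
def dyCube (n : ℕ) (k : ℤ) (j : Fin n → ℤ) : Set (Fin n → ℝ) :=
  {x | ∀ d, (j d : ℝ) * (2 : ℝ) ^ (-k) ≤ x d ∧ x d < ((j d : ℝ) + 1) * (2 : ℝ) ^ (-k)}

/-- The position index of the `kk`-th dyadic ancestor `I^{(kk)}` of the cube at
position `j`. -/
def ancIdx {n : ℕ} (j : Fin n → ℤ) (kk : ℕ) : Fin n → ℤ := fun d => (j d).fdiv (2 ^ kk)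

/-- The dyadic rectangle `R = I × J` of a product dyadic system. -/
def dyRect (n m : ℕ) (k : ℤ) (j : Fin n → ℤ) (l : ℤ) (i : Fin m → ℤ) :
    Set ((Fin n → ℝ) × (Fin m → ℝ)) :=
  dyCube n k j ×ˢ dyCube m l i

/-- `R^{(kk,0)} = I^{(kk)} × J`: ancestor in the first parameter only. -/
def ancRect (n m : ℕ) (k : ℤ) (j : Fin n → ℤ) (l : ℤ) (i : Fin m → ℤ) (kk : ℕ) :
    Set ((Fin n → ℝ) × (Fin m → ℝ)) :=
  dyRect n m (k - kk) (ancIdx j kk) l i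

/-- The enlargement `Ω̃ = {Mχ_Ω > 1/2}`, where `M` is the strong dyadic maximal
operator over the dyadic rectangles: `x ∈ Ω̃` iff some dyadic rectangle `R ∋ x`
satisfies `μ(R) < 2 μ(R ∩ Ω)`. -/
def tildeSet {n m : ℕ} (μn : Measure (Fin n → ℝ)) (μm : Measure (Fin m → ℝ))
    (Ω : Set ((Fin n → ℝ) × (Fin m → ℝ))) : Set ((Fin n → ℝ) × (Fin m → ℝ)) :=
  {z | ∃ (k : ℤ) (j : Fin n → ℤ) (l : ℤ) (i : Fin m → ℤ),
    z ∈ dyRect n m k j l i ∧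
      μn.prod μm (dyRect n m k j l i) < 2 * μn.prod μm (dyRect n m k j l i ∩ Ω)}

/-- `R = I × J` is 2-maximal in `Ω`: `R ⊆ Ω` but `I × J̃ ⊄ Ω` for any dyadic
`J̃ ⊋ J`. -/
def TwoMaximal {n m : ℕ} (Ω : Set ((Fin n → ℝ) × (Fin m → ℝ)))
    (k : ℤ) (j : Fin n → ℤ) (l : ℤ) (i : Fin m → ℤ) : Prop :=
  dyRect n m k j l i ⊆ Ω ∧
    ∀ (l' : ℤ) (i' : Fin m → ℤ), dyCube m l i ⊂ dyCube m l' i' →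
      ¬ dyRect n m k j l' i' ⊆ Ω


section Aux

lemma two_zpow_pos (k : ℤ) : (0:ℝ) < (2:ℝ) ^ k := zpow_pos (by norm_num) k

lemma mem_dyCube {n : ℕ} {k : ℤ} {j : Fin n → ℤ} {x : Fin n → ℝ} :
    x ∈ dyCube n k j ↔ ∀ d, ⌊x d * (2:ℝ) ^ k⌋ = j d := by
  unfold dyCube
  simp only [Set.mem_setOf_eq]
  refine forall_congr' fun d => ?_
  rw [Int.floor_eq_iff, zpow_neg, ← div_eq_mul_inv, ← div_eq_mul_inv,
    div_le_iff₀ (two_zpow_pos k), lt_div_iff₀ (two_zpow_pos k)]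

lemma corner_mem {n : ℕ} (k : ℤ) (j : Fin n → ℤ) :
    (fun d => (j d : ℝ) * (2:ℝ) ^ (-k)) ∈ dyCube n k j := by
  intro d
  refine ⟨le_refl _, ?_⟩
  show (j d : ℝ) * (2:ℝ)^(-k) < ((j d : ℝ) + 1) * (2:ℝ)^(-k)
  have := two_zpow_pos (-k)
  nlinarith

lemma floor_ediv (r : ℝ) {nn : ℤ} (h : 0 < nn) : ⌊r / (nn : ℝ)⌋ = ⌊r⌋ / nn := by
  have hn : (0:ℝ) < (nn:ℝ) := by exact_mod_cast h
  have hmod1 : 0 ≤ ⌊r⌋ % nn := Int.emod_nonneg _ (by omega)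
  have hmod2 : ⌊r⌋ % nn < nn := Int.emod_lt_of_pos _ h
  have hdm : nn * (⌊r⌋ / nn) + ⌊r⌋ % nn = ⌊r⌋ := Int.mul_ediv_add_emod _ _
  have hR : (nn:ℝ) * ((⌊r⌋ / nn : ℤ):ℝ) + ((⌊r⌋ % nn : ℤ):ℝ) = (⌊r⌋:ℝ) := by
    exact_mod_cast congrArg (fun z : ℤ => (z:ℝ)) hdm
  have hm1 : (0:ℝ) ≤ ((⌊r⌋ % nn : ℤ):ℝ) := by exact_mod_cast hmod1
  have hm2 : ((⌊r⌋ % nn : ℤ):ℝ) + 1 ≤ (nn:ℝ) := by exact_mod_cast hmod2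
  have hfl : (⌊r⌋:ℝ) ≤ r := Int.floor_le r
  have hfu : r < (⌊r⌋:ℝ) + 1 := Int.lt_floor_add_one r
  rw [Int.floor_eq_iff]
  constructor
  · rw [le_div_iff₀ hn, mul_comm]; nlinarith
  · rw [div_lt_iff₀ hn, add_mul, mul_comm]; nlinarith

lemma floor_zpow_sub (r : ℝ) (k : ℤ) (M : ℕ) :
    ⌊r * (2:ℝ) ^ (k - (M:ℤ))⌋ = (⌊r * (2:ℝ) ^ k⌋).fdiv (2 ^ M) := by
  have h2 : (0:ℤ) < 2 ^ M := by positivity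
  rw [Int.fdiv_eq_ediv_of_nonneg _ (le_of_lt h2), ← floor_ediv _ h2]
  congr 1
  have h3 : ((2^M : ℤ) : ℝ) = (2:ℝ) ^ (M:ℤ) := by
    push_cast
    exact (zpow_natCast 2 M).symm
  rw [h3, zpow_sub₀ (by norm_num : (2:ℝ) ≠ 0)]
  ring

lemma dyCube_subset_anc {n : ℕ} (k : ℤ) (j : Fin n → ℤ) (M : ℕ) :
    dyCube n k j ⊆ dyCube n (k - M) (fun d => (j d).fdiv (2 ^ M)) := by
  intro x hx
  rw [mem_dyCube] at hx ⊢
  intro d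
  rw [floor_zpow_sub, hx d]

lemma dyCube_nesting {n : ℕ} {k k' : ℤ} {j j' : Fin n → ℤ} {x : Fin n → ℝ}
    (h : k' ≤ k) (hx : x ∈ dyCube n k j) (hx' : x ∈ dyCube n k' j') :
    dyCube n k j ⊆ dyCube n k' j' := by
  intro y hy
  rw [mem_dyCube] at hx hx' hy ⊢
  intro d
  obtain ⟨M, hM⟩ : ∃ M : ℕ, k' = k - M := ⟨(k - k').toNat, by omega⟩
  subst hM
  rw [floor_zpow_sub, hy d, ← hx d, ← floor_zpow_sub, hx' d]

lemma dyCube_ne {m : ℕ} (hm : 0 < m) {l l' : ℤ} {i i' : Fin m → ℤ} (h : l' < l) :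
    dyCube m l i ≠ dyCube m l' i' := by
  intro heq
  have hlt : (2:ℝ)^(-l) < 2^(-l') := zpow_lt_zpow_right₀ one_lt_two (by omega)
  have hq := corner_mem l' i'
  have hp : (fun d => (i' d : ℝ) * 2^(-l') + ((2:ℝ)^(-l') - 2^(-l))) ∈ dyCube m l' i' := by
    intro d
    have h0 := two_zpow_pos (-l)
    constructor
    · show (i' d : ℝ) * 2^(-l') ≤ (i' d : ℝ) * 2^(-l') + ((2:ℝ)^(-l') - 2^(-l))
      linarith
    · show (i' d : ℝ) * 2^(-l') + ((2:ℝ)^(-l') - 2^(-l)) < ((i' d : ℝ) + 1) * 2^(-l')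
      nlinarith
  rw [← heq] at hp hq
  have h1 : (↑(i' ⟨0, hm⟩):ℝ) * 2^(-l') + ((2:ℝ)^(-l') - 2^(-l)) < ((i ⟨0, hm⟩ : ℝ) + 1) * 2^(-l) :=
    (hp ⟨0, hm⟩).2
  have h2 : ((i ⟨0, hm⟩ : ℝ)) * 2^(-l) ≤ (↑(i' ⟨0, hm⟩):ℝ) * 2^(-l') := (hq ⟨0, hm⟩).1
  have key : (2:ℝ)^(-l') < 2^(1 + -l) := by
    rw [zpow_add₀ (by norm_num : (2:ℝ) ≠ 0), zpow_one]
    nlinarith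
  have := (zpow_lt_zpow_iff_right₀ (one_lt_two (α := ℝ))).mp key
  omega

lemma dyCube_ssubset {m : ℕ} (hm : 0 < m) {l l' : ℤ} {i i' : Fin m → ℤ} (h : l' < l)
    (hsub : dyCube m l i ⊆ dyCube m l' i') : dyCube m l i ⊂ dyCube m l' i' :=
  ssubset_of_subset_of_ne hsub (dyCube_ne hm h)

lemma measurableSet_dyCube {n : ℕ} (k : ℤ) (j : Fin n → ℤ) :
    MeasurableSet (dyCube n k j) := by
  have : dyCube n k j =
      Set.pi Set.univ (fun d => Set.Ico ((j d : ℝ) * 2^(-k)) (((j d : ℝ) + 1) * 2^(-k))) := by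
    ext x
    simp [dyCube, Set.mem_pi, Set.mem_Ico]
  rw [this]
  exact MeasurableSet.univ_pi fun d => measurableSet_Ico

lemma sum_if_telescope (ω : ℕ → ℝ) (e M : ℕ) (hM : e ≤ M) :
    ∑ kk ∈ Finset.range M, (if e ≤ kk then ω kk - ω (kk+1) else 0) = ω e - ω M := by
  have hsub : Finset.Ico e M ⊆ Finset.range M := fun x hx =>
    Finset.mem_range.mpr (Finset.mem_Ico.mp hx).2
  have h1 : ∑ kk ∈ Finset.range M, (if e ≤ kk then ω kk - ω (kk+1) else 0)
      = ∑ kk ∈ Finset.Ico e M, (if e ≤ kk then ω kk - ω (kk+1) else 0) := by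
    refine (Finset.sum_subset hsub ?_).symm
    intro x hx hnx
    by_cases hle : e ≤ x
    · exact absurd (Finset.mem_Ico.mpr ⟨hle, Finset.mem_range.mp hx⟩) hnx
    · exact if_neg hle
  rw [h1, Finset.sum_congr rfl (fun x hx => if_pos (Finset.mem_Ico.mp hx).1),
    Finset.sum_Ico_eq_sum_range]
  have h2 := Finset.sum_range_sub' (fun t => ω (e + t)) (M - e)
  calc ∑ t ∈ Finset.range (M - e), (ω (e + t) - ω (e + t + 1))
      = ∑ t ∈ Finset.range (M - e), (ω (e + t) - ω (e + (t + 1))) := by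
        refine Finset.sum_congr rfl fun t _ => by rw [← Nat.add_assoc]
    _ = ω (e + 0) - ω (e + (M - e)) := h2
    _ = ω e - ω M := by rw [Nat.add_zero, Nat.add_sub_cancel' hM]

lemma L1 (ω : ℕ → ℝ) (hpos : ∀ k, 0 ≤ ω k) (hdec : ∀ k l, k ≤ l → ω l ≤ ω k)
    (hsum : Summable ω) (e : ℕ) :
    ENNReal.ofReal (ω e) ≤
      ∑' kk, (if e ≤ kk then ENNReal.ofReal (ω kk - ω (kk+1)) else 0) := by
  set f : ℕ → ℝ := fun kk => if e ≤ kk then ω kk - ω (kk+1) else 0 with hf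
  have hf0 : ∀ kk, 0 ≤ f kk := by
    intro kk; simp only [hf]
    split_ifs
    · linarith [hdec kk (kk+1) (by omega)]
    · exact le_refl 0
  have hfle : ∀ kk, f kk ≤ ω kk := by
    intro kk; simp only [hf]
    split_ifs
    · linarith [hpos (kk+1)]
    · exact hpos kk
  have hfs : Summable f := Summable.of_nonneg_of_le hf0 hfle hsum
  have heq : ∀ kk, (if e ≤ kk then ENNReal.ofReal (ω kk - ω (kk+1)) else 0)
      = ENNReal.ofReal (f kk) := by
    intro kk; simp only [hf]; split_ifs <;> simp
  simp only [heq]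
  rw [← ENNReal.ofReal_tsum_of_nonneg hf0 hfs]
  apply ENNReal.ofReal_le_ofReal
  have hten : Filter.Tendsto (fun M => ω e - ω M) Filter.atTop (nhds (ω e)) := by
    have := hsum.tendsto_atTop_zero
    simpa using (tendsto_const_nhds (x := ω e)).sub this
  refine le_of_tendsto hten (Filter.eventually_atTop.mpr ⟨e, fun M hM => ?_⟩)
  rw [← sum_if_telescope ω e M hM]
  exact hfs.sum_le_tsum _ (fun kk _ => hf0 kk)

lemma abel_identity (ω : ℕ → ℝ) (N : ℕ) :
    ∑ kk ∈ Finset.range N, ((kk : ℝ) + 1) * (ω kk - ω (kk+1))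
      = ∑ kk ∈ Finset.range N, ω kk - N * ω N := by
  induction N with
  | zero => simp
  | succ N ih =>
    rw [Finset.sum_range_succ, ih, Finset.sum_range_succ]
    push_cast
    ring

lemma L2 (ω : ℕ → ℝ) (hpos : ∀ k, 0 ≤ ω k) (hdec : ∀ k l, k ≤ l → ω l ≤ ω k)
    (hsum : Summable ω) :
    ∑' kk : ℕ, ((kk : ENNReal) + 1) * ENNReal.ofReal (ω kk - ω (kk+1))
      ≤ ENNReal.ofReal (∑' k, ω k) := by
  have hd0 : ∀ kk : ℕ, 0 ≤ ω kk - ω (kk+1) := fun kk => by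
    linarith [hdec kk (kk+1) (by omega)]
  rw [ENNReal.tsum_eq_iSup_sum]
  refine iSup_le fun s => ?_
  obtain ⟨N, hN⟩ : ∃ N, s ⊆ Finset.range N := ⟨s.sup id + 1, fun x hx =>
    Finset.mem_range.mpr (Nat.lt_succ_of_le (Finset.le_sup (f := id) hx))⟩
  refine le_trans (Finset.sum_le_sum_of_subset hN) ?_
  have hterm : ∀ kk : ℕ, ((kk : ENNReal) + 1) * ENNReal.ofReal (ω kk - ω (kk+1))
      = ENNReal.ofReal (((kk:ℝ) + 1) * (ω kk - ω (kk+1))) := by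
    intro kk
    rw [ENNReal.ofReal_mul (by positivity)]
    congr 1
    rw [ENNReal.ofReal_add (by positivity) zero_le_one, ENNReal.ofReal_natCast,
      ENNReal.ofReal_one]
  calc ∑ kk ∈ Finset.range N, ((kk : ENNReal) + 1) * ENNReal.ofReal (ω kk - ω (kk+1))
      = ENNReal.ofReal (∑ kk ∈ Finset.range N, ((kk:ℝ) + 1) * (ω kk - ω (kk+1))) := by
        rw [ENNReal.ofReal_sum_of_nonneg (fun kk _ => mul_nonneg (by positivity) (hd0 kk))]
        exact Finset.sum_congr rfl fun kk _ => hterm kk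
    _ ≤ ENNReal.ofReal (∑' k, ω k) := by
        apply ENNReal.ofReal_le_ofReal
        rw [abel_identity]
        have h1 : 0 ≤ (N:ℝ) * ω N := mul_nonneg (Nat.cast_nonneg N) (hpos N)
        have h2 : ∑ kk ∈ Finset.range N, ω kk ≤ ∑' k, ω k :=
          hsum.sum_le_tsum _ (fun kk _ => hpos kk)
        linarith


end Aux

section ClassBound

variable {n m : ℕ} {μn : Measure (Fin n → ℝ)} {μm : Measure (Fin m → ℝ)}
  [SFinite μn] [SFinite μm] {Ω : Set ((Fin n → ℝ) × (Fin m → ℝ))}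

lemma measurableSet_dyRect (k : ℤ) (j : Fin n → ℤ) (l : ℤ) (i : Fin m → ℤ) :
    MeasurableSet (dyRect n m k j l i) :=
  (measurableSet_dyCube _ _).prod (measurableSet_dyCube _ _)

lemma subset_tilde {k : ℤ} {j : Fin n → ℤ} {l : ℤ} {i : Fin m → ℤ}
    (hsub : dyRect n m k j l i ⊆ Ω)
    (h0 : μn.prod μm (dyRect n m k j l i) ≠ 0)
    (hfin : μn.prod μm (dyRect n m k j l i) ≠ ⊤) :
    dyRect n m k j l i ⊆ tildeSet μn μm Ω := by
  intro z hz
  refine ⟨k, j, l, i, hz, ?_⟩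
  rw [Set.inter_eq_self_of_subset_left hsub, two_mul]
  exact ENNReal.lt_add_right hfin h0

lemma dyRect_subset_anc (k : ℤ) (j : Fin n → ℤ) (l : ℤ) (i : Fin m → ℤ) (M : ℕ) :
    dyRect n m k j l i ⊆ ancRect n m k j l i M := fun z hz =>
  ⟨dyCube_subset_anc k j M hz.1, hz.2⟩

lemma classBound (hn : 0 < n) (hm : 0 < m) (hΩfin : μn.prod μm Ω < ⊤) (K : ℕ)
    (C : Set ((ℤ × (Fin n → ℤ)) × (ℤ × (Fin m → ℤ))))
    (hTM : ∀ R ∈ C, TwoMaximal Ω R.1.1 R.1.2 R.2.1 R.2.2)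
    (hBad : ∀ R ∈ C, ¬ ancRect n m R.1.1 R.1.2 R.2.1 R.2.2 (K+1) ⊆ tildeSet μn μm Ω)
    (hCl : ∀ R ∈ C, ∀ R' ∈ C, ((K:ℤ)+1) ∣ (R.1.1 - R'.1.1)) :
    ∑' R : C, μn.prod μm (dyRect n m R.val.1.1 R.val.1.2 R.val.2.1 R.val.2.2)
      ≤ 2 * μn.prod μm Ω := by
  classical
  set μ := μn.prod μm with hμ
  set E : C → Set ((Fin n → ℝ) × (Fin m → ℝ)) := fun R =>
    dyRect n m R.val.1.1 R.val.1.2 R.val.2.1 R.val.2.2 \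
      ⋃ R' : {S : C // S.val.1.1 < R.val.1.1},
        dyRect n m R'.val.val.1.1 R'.val.val.1.2 R'.val.val.2.1 R'.val.val.2.2
    with hE
  have measE : ∀ R : C, MeasurableSet (E R) := fun R =>
    (measurableSet_dyRect _ _ _ _).diff (MeasurableSet.iUnion fun R' =>
      measurableSet_dyRect _ _ _ _)
  -- disjointness
  have disj : Pairwise (Function.onFun Disjoint E) := by
    intro R1 R2 hne
    rw [Function.onFun, Set.disjoint_left]
    intro x hx1 hx2
    rcases lt_trichotomy R1.val.1.1 R2.val.1.1 with hlt | heq | hlt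
    · exact hx2.2 (Set.mem_iUnion.mpr ⟨⟨R1, hlt⟩, hx1.1⟩)
    · -- same first generation
      have hj : R1.val.1.2 = R2.val.1.2 := by
        funext d
        rw [← (mem_dyCube.mp hx1.1.1) d, heq, (mem_dyCube.mp hx2.1.1) d]
      rcases lt_trichotomy R1.val.2.1 R2.val.2.1 with hl | hleq | hl
      ·
        have hJ : dyCube m R2.val.2.1 R2.val.2.2 ⊆ dyCube m R1.val.2.1 R1.val.2.2 :=
          dyCube_nesting (le_of_lt hl) hx2.1.2 hx1.1.2
        have hss := dyCube_ssubset hm hl hJ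
        refine (hTM _ R2.prop).2 _ _ hss ?_
        intro z hz
        exact (hTM _ R1.prop).1 ⟨by rw [← heq, ← hj] at hz; exact hz.1, hz.2⟩
      · -- all equal: R1 = R2
        have hi : R1.val.2.2 = R2.val.2.2 := by
          funext d
          rw [← (mem_dyCube.mp hx1.1.2) d, hleq, (mem_dyCube.mp hx2.1.2) d]
        exact hne (Subtype.ext (Prod.ext (Prod.ext heq hj) (Prod.ext hleq hi)))
      · have hJ : dyCube m R1.val.2.1 R1.val.2.2 ⊆ dyCube m R2.val.2.1 R2.val.2.2 :=
          dyCube_nesting (le_of_lt hl) hx1.1.2 hx2.1.2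
        have hss := dyCube_ssubset hm hl hJ
        refine (hTM _ R1.prop).2 _ _ hss ?_
        intro z hz
        exact (hTM _ R2.prop).1 ⟨by rw [heq, hj] at hz; exact hz.1, hz.2⟩
    · exact hx1.2 (Set.mem_iUnion.mpr ⟨⟨R2, hlt⟩, hx2.1⟩)
  have half : ∀ R : C, μ (dyRect n m R.val.1.1 R.val.1.2 R.val.2.1 R.val.2.2)
      ≤ 2 * μ (E R) := by
    rintro ⟨⟨⟨k, j⟩, l, i⟩, hRC⟩
    show μ (dyRect n m k j l i) ≤ 2 * μ (E ⟨((k, j), (l, i)), hRC⟩)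
    by_cases hz0 : μ (dyRect n m k j l i) = 0
    · rw [hz0]; exact zero_le
    set A := dyCube n (k - ((K + 1 : ℕ) : ℤ)) (ancIdx j (K + 1)) with hA
    set P : C → Prop := fun S => S.val.1.1 < k ∧
      (dyRect n m S.val.1.1 S.val.1.2 S.val.2.1 S.val.2.2 ∩ dyRect n m k j l i).Nonempty
      with hP
    set B := ⋃ S : {S : C // P S}, dyCube m S.val.val.2.1 S.val.val.2.2 with hB
    have claim : ∀ S : C, P S → dyCube m S.val.2.1 S.val.2.2 ⊆ dyCube m l i ∧
        A ⊆ dyCube n S.val.1.1 S.val.1.2 := by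
      rintro ⟨⟨⟨k', j'⟩, l', i'⟩, hSC⟩ ⟨hk', x, hxS, hxR⟩
      simp only [] at hk' hxS ⊢
      have hdvd : ((K : ℤ) + 1) ∣ (k - k') := hCl _ hRC _ hSC
      have hgap : ((K : ℤ) + 1) ≤ k - k' := Int.le_of_dvd (by omega) hdvd
      have hanc1 : x.1 ∈ A := by
        rw [hA]
        exact dyCube_subset_anc k j (K + 1) hxR.1
      have hanc : A ⊆ dyCube n k' j' := by
        refine dyCube_nesting ?_ hanc1 hxS.1
        push_cast
        omega
      refine ⟨?_, hanc⟩
      rcases lt_trichotomy l' l with hl | hl | hl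
      · exfalso
        have hJJ' : dyCube m l i ⊆ dyCube m l' i' :=
          dyCube_nesting (le_of_lt hl) hxR.2 hxS.2
        refine (hTM _ hRC).2 l' i' (dyCube_ssubset hm hl hJJ') ?_
        have hII' : dyCube n k j ⊆ dyCube n k' j' :=
          dyCube_nesting (by omega) hxR.1 hxS.1
        intro z hz
        exact (hTM _ hSC).1 ⟨hII' hz.1, hz.2⟩
      · exfalso
        subst hl
        have hii : i' = i := funext fun d => by
          rw [← (mem_dyCube.mp hxS.2) d, (mem_dyCube.mp hxR.2) d]
        subst hii
        have hII' : dyCube n k j ⊆ dyCube n k' j' :=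
          dyCube_nesting (by omega) hxR.1 hxS.1
        have hsubRR' : dyRect n m k j l' i' ⊆ dyRect n m k' j' l' i' :=
          fun z hz => ⟨hII' hz.1, hz.2⟩
        have hsubΩ : dyRect n m k' j' l' i' ⊆ Ω := (hTM _ hSC).1
        have hne0 : μ (dyRect n m k' j' l' i') ≠ 0 := by
          intro h0
          exact hz0 (le_antisymm (le_trans (measure_mono hsubRR') (le_of_eq h0)) (zero_le))
        have hneT : μ (dyRect n m k' j' l' i') ≠ ⊤ :=
          (lt_of_le_of_lt (measure_mono hsubΩ) hΩfin).ne
        refine hBad _ hRC ?_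
        intro z hz
        refine subset_tilde hsubΩ hne0 hneT ⟨hanc hz.1, hz.2⟩
      · exact dyCube_nesting (le_of_lt hl) hxS.2 hxR.2
    have hBsubJ : B ⊆ dyCube m l i := Set.iUnion_subset fun S => (claim S.val S.prop).1
    have hABΩ : A ×ˢ B ⊆ Ω := by
      rintro ⟨u, v⟩ ⟨hu, hv⟩
      rcases Set.mem_iUnion.mp hv with ⟨S, hvS⟩
      exact (hTM _ S.val.prop).1 ⟨(claim S.val S.prop).2 hu, hvS⟩
    obtain ⟨z, hzanc, hztilde⟩ := Set.not_subset.mp (hBad _ hRC)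
    have hineq : 2 * μ (dyRect n m (k - ((K + 1 : ℕ) : ℤ)) (ancIdx j (K + 1)) l i ∩ Ω)
        ≤ μ (dyRect n m (k - ((K + 1 : ℕ) : ℤ)) (ancIdx j (K + 1)) l i) := by
      by_contra hcon
      exact hztilde ⟨_, _, _, _, hzanc, not_le.mp hcon⟩
    have hsub1 : A ×ˢ B ⊆ dyRect n m (k - ((K + 1 : ℕ) : ℤ)) (ancIdx j (K + 1)) l i ∩ Ω :=
      fun w hw => ⟨⟨hw.1, hBsubJ hw.2⟩, hABΩ hw⟩
    have h2ab : 2 * (μn A * μm B) ≤ μn A * μm (dyCube m l i) := by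
      calc 2 * (μn A * μm B) = 2 * μ (A ×ˢ B) := by rw [hμ, Measure.prod_prod]
        _ ≤ 2 * μ (dyRect n m (k - ((K + 1 : ℕ) : ℤ)) (ancIdx j (K + 1)) l i ∩ Ω) :=
            mul_le_mul_right (measure_mono hsub1) 2
        _ ≤ μ (dyRect n m (k - ((K + 1 : ℕ) : ℤ)) (ancIdx j (K + 1)) l i) := hineq
        _ = μn A * μm (dyCube m l i) := by rw [hμ]; exact Measure.prod_prod _ _
    have habfin : μn A * μm B ≤ μ Ω := by
      calc μn A * μm B = μ (A ×ˢ B) := by rw [hμ, Measure.prod_prod]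
        _ ≤ μ Ω := measure_mono hABΩ
    have h2 : 2 * (μn (dyCube n k j) * μm B) ≤ μ (dyRect n m k j l i) := by
      have hba : μn (dyCube n k j) ≤ μn A := measure_mono (by
        rw [hA]; exact dyCube_subset_anc k j (K + 1))
      rcases eq_or_ne (μn A) 0 with ha0 | ha0
      · have hb0 : μn (dyCube n k j) = 0 := le_antisymm (ha0 ▸ hba) (zero_le)
        rw [hb0, zero_mul, mul_zero]
        exact zero_le
      rcases eq_or_ne (μn A) ⊤ with haT | haT
      · have hc0 : μm B = 0 := by
          by_contra hc0
          rw [haT, ENNReal.top_mul hc0] at habfin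
          exact absurd (lt_of_le_of_lt habfin hΩfin) (lt_irrefl ⊤)
        rw [hc0, mul_zero, mul_zero]
        exact zero_le
      · have h2c : 2 * μm B ≤ μm (dyCube m l i) := by
          have h' : μn A * (2 * μm B) ≤ μn A * μm (dyCube m l i) := by
            calc μn A * (2 * μm B) = 2 * (μn A * μm B) := by ring
              _ ≤ μn A * μm (dyCube m l i) := h2ab
          exact (ENNReal.mul_le_mul_iff_right ha0 haT).mp h'
        calc 2 * (μn (dyCube n k j) * μm B) = μn (dyCube n k j) * (2 * μm B) := by ring
          _ ≤ μn (dyCube n k j) * μm (dyCube m l i) := by gcongr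
          _ = μ (dyRect n m k j l i) := by rw [hμ]; exact (Measure.prod_prod _ _).symm
    have hcover : dyRect n m k j l i ⊆
        E ⟨((k, j), (l, i)), hRC⟩ ∪ (dyCube n k j ×ˢ B) := by
      intro x hx
      by_cases hxU : x ∈ ⋃ R' : {S : C // S.val.1.1 <
          ((⟨((k, j), (l, i)), hRC⟩ : C)).val.1.1},
        dyRect n m R'.val.val.1.1 R'.val.val.1.2 R'.val.val.2.1 R'.val.val.2.2
      · right
        rcases Set.mem_iUnion.mp hxU with ⟨⟨S, hSlt⟩, hxS⟩
        refine ⟨hx.1, Set.mem_iUnion.mpr ⟨⟨S, hSlt, ⟨x, hxS, hx⟩⟩, hxS.2⟩⟩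
      · left
        exact ⟨hx, hxU⟩
    have h1 : μ (dyRect n m k j l i) ≤ μ (E ⟨((k, j), (l, i)), hRC⟩)
        + μn (dyCube n k j) * μm B := by
      calc μ (dyRect n m k j l i)
          ≤ μ (E ⟨((k, j), (l, i)), hRC⟩ ∪ (dyCube n k j ×ˢ B)) := measure_mono hcover
        _ ≤ μ (E ⟨((k, j), (l, i)), hRC⟩) + μ (dyCube n k j ×ˢ B) := measure_union_le _ _
        _ = μ (E ⟨((k, j), (l, i)), hRC⟩) + μn (dyCube n k j) * μm B := by
            rw [hμ, Measure.prod_prod]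
    have hfinR : μ (dyRect n m k j l i) ≠ ⊤ :=
      (lt_of_le_of_lt (measure_mono (hTM _ hRC).1) hΩfin).ne
    have h3 : μ (dyRect n m k j l i) + μ (dyRect n m k j l i)
        ≤ 2 * μ (E ⟨((k, j), (l, i)), hRC⟩) + μ (dyRect n m k j l i) := by
      calc μ (dyRect n m k j l i) + μ (dyRect n m k j l i)
          = 2 * μ (dyRect n m k j l i) := (two_mul _).symm
        _ ≤ 2 * (μ (E ⟨((k, j), (l, i)), hRC⟩) + μn (dyCube n k j) * μm B) := by gcongr
        _ = 2 * μ (E ⟨((k, j), (l, i)), hRC⟩) + 2 * (μn (dyCube n k j) * μm B) := by ring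
        _ ≤ 2 * μ (E ⟨((k, j), (l, i)), hRC⟩) + μ (dyRect n m k j l i) := by gcongr
    exact ENNReal.le_of_add_le_add_right hfinR h3
  calc ∑' R : C, μ (dyRect n m R.val.1.1 R.val.1.2 R.val.2.1 R.val.2.2)
      ≤ ∑' R : C, 2 * μ (E R) := ENNReal.tsum_le_tsum half
    _ = 2 * ∑' R : C, μ (E R) := ENNReal.tsum_mul_left
    _ = 2 * μ (⋃ R : C, E R) := by rw [measure_iUnion disj measE]
    _ ≤ 2 * μ Ω := by
        gcongr
        exact Set.iUnion_subset fun R => Set.diff_subset.trans (hTM _ R.prop).1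

end ClassBound
section KeyBound

variable {n m : ℕ} {μn : Measure (Fin n → ℝ)} {μm : Measure (Fin m → ℝ)}
  [SFinite μn] [SFinite μm] {Ω : Set ((Fin n → ℝ) × (Fin m → ℝ))}

abbrev Idx (n m : ℕ) := (ℤ × (Fin n → ℤ)) × (ℤ × (Fin m → ℤ))

set_option linter.unusedSectionVars false in
set_option maxHeartbeats 1000000 in
lemma keyBound (hn : 0 < n) (hm : 0 < m) (hΩfin : μn.prod μm Ω < ⊤) (K : ℕ) :
    ∑' R : {R : (ℤ × (Fin n → ℤ)) × (ℤ × (Fin m → ℤ)) //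
        TwoMaximal Ω R.1.1 R.1.2 R.2.1 R.2.2},
      ({S : (ℤ × (Fin n → ℤ)) × (ℤ × (Fin m → ℤ)) |
          ¬ ancRect n m S.1.1 S.1.2 S.2.1 S.2.2 (K+1) ⊆ tildeSet μn μm Ω}.indicator
        (fun S => μn.prod μm (dyRect n m S.1.1 S.1.2 S.2.1 S.2.2)) R.val)
      ≤ 2 * ((K : ENNReal) + 1) * μn.prod μm Ω := by
  classical
  set μ := μn.prod μm with hμ
  set TMset : Set (Idx n m) := {R | TwoMaximal Ω R.1.1 R.1.2 R.2.1 R.2.2} with hTMset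
  set g : Idx n m → ENNReal := fun R =>
    if ¬ ancRect n m R.1.1 R.1.2 R.2.1 R.2.2 (K+1) ⊆ tildeSet μn μm Ω
    then μ (dyRect n m R.1.1 R.1.2 R.2.1 R.2.2) else 0 with hg
  set C : ℕ → Set (Idx n m) := fun r => {R | TwoMaximal Ω R.1.1 R.1.2 R.2.1 R.2.2 ∧
    ¬ ancRect n m R.1.1 R.1.2 R.2.1 R.2.2 (K+1) ⊆ tildeSet μn μm Ω ∧
    R.1.1 % ((K : ℤ) + 1) = (r : ℤ)} with hC
  have hgeq : ∀ R : Idx n m, ({S : Idx n m |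
          ¬ ancRect n m S.1.1 S.1.2 S.2.1 S.2.2 (K+1) ⊆ tildeSet μn μm Ω}.indicator
        (fun S => μ (dyRect n m S.1.1 S.1.2 S.2.1 S.2.2)) R) = g R := by
    intro R
    by_cases hb : ¬ ancRect n m R.1.1 R.1.2 R.2.1 R.2.2 (K+1) ⊆ tildeSet μn μm Ω
    · rw [Set.indicator_of_mem (show R ∈ {S : Idx n m |
          ¬ ancRect n m S.1.1 S.1.2 S.2.1 S.2.2 (K+1) ⊆ tildeSet μn μm Ω} from hb)]
      exact (if_pos hb).symm
    · rw [Set.indicator_of_notMem (show R ∉ {S : Idx n m |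
          ¬ ancRect n m S.1.1 S.1.2 S.2.1 S.2.2 (K+1) ⊆ tildeSet μn μm Ω} from hb)]
      exact (if_neg hb).symm
  refine le_trans (le_of_eq (tsum_congr (fun R => hgeq R.val))) ?_
  have step1 : ∑' R : TMset, g R.val = ∑' R : Idx n m, TMset.indicator g R := tsum_subtype _ _
  have step2 : ∀ R : Idx n m, TMset.indicator g R
      = ∑ r ∈ Finset.range (K+1), (C r).indicator (fun S => μ (dyRect n m S.1.1 S.1.2 S.2.1 S.2.2)) R := by
    intro R
    by_cases hTm : R ∈ TMset
    · rw [Set.indicator_of_mem hTm]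
      by_cases hbad : ¬ ancRect n m R.1.1 R.1.2 R.2.1 R.2.2 (K+1) ⊆ tildeSet μn μm Ω
      · rw [hg]
        simp only [if_pos hbad]
        have h0 : 0 ≤ R.1.1 % ((K : ℤ) + 1) := Int.emod_nonneg _ (by omega)
        have hlt : R.1.1 % ((K : ℤ) + 1) < (K : ℤ) + 1 := Int.emod_lt_of_pos _ (by omega)
        set t : ℕ := (R.1.1 % ((K : ℤ) + 1)).toNat with ht
        have htK : t ∈ Finset.range (K+1) := Finset.mem_range.mpr (by omega)
        have hmem : ∀ r : ℕ, (C r).indicator (fun S => μ (dyRect n m S.1.1 S.1.2 S.2.1 S.2.2)) R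
            = if r = t then μ (dyRect n m R.1.1 R.1.2 R.2.1 R.2.2) else 0 := by
          intro r
          by_cases hr : r = t
          · subst hr
            rw [Set.indicator_of_mem, if_pos rfl]
            exact ⟨hTm, hbad, by omega⟩
          · rw [Set.indicator_of_notMem, if_neg hr]
            intro hRC
            exact hr (by have := hRC.2.2; omega)
        rw [Finset.sum_congr rfl (fun r _ => hmem r), Finset.sum_ite_eq' (Finset.range (K+1)) t
          (fun _ => μ (dyRect n m R.1.1 R.1.2 R.2.1 R.2.2)), if_pos htK]
      · rw [hg]
        simp only [if_neg hbad]
        symm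
        refine Finset.sum_eq_zero fun r _ => ?_
        refine Set.indicator_of_notMem (fun hRC => hbad hRC.2.1) _
    · rw [Set.indicator_of_notMem hTm]
      symm
      refine Finset.sum_eq_zero fun r _ => ?_
      exact Set.indicator_of_notMem (fun hRC => hTm hRC.1) _
  calc ∑' R : TMset, g R.val
      = ∑' R : Idx n m, ∑ r ∈ Finset.range (K+1),
          (C r).indicator (fun S => μ (dyRect n m S.1.1 S.1.2 S.2.1 S.2.2)) R := by
        rw [step1]; exact tsum_congr step2
    _ = ∑ r ∈ Finset.range (K+1), ∑' R : Idx n m,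
          (C r).indicator (fun S => μ (dyRect n m S.1.1 S.1.2 S.2.1 S.2.2)) R :=
        Summable.tsum_finsetSum (fun r _ => ENNReal.summable)
    _ ≤ ∑ r ∈ Finset.range (K+1), 2 * μ Ω := by
        refine Finset.sum_le_sum fun r _ => ?_
        rw [← tsum_subtype]
        refine classBound hn hm hΩfin K (C r) (fun R hR => hR.1) (fun R hR => hR.2.1) ?_
        intro R hR R' hR'
        have h1 := hR.2.2
        have h2 := hR'.2.2
        have : (R.1.1 - R'.1.1) % ((K : ℤ) + 1) = 0 := by
          rw [Int.sub_emod, h1, h2]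
          simp
        exact Int.dvd_of_emod_eq_zero this
    _ = 2 * ((K : ENNReal) + 1) * μ Ω := by
        rw [Finset.sum_const, Finset.card_range, nsmul_eq_mul]
        push_cast
        ring

end KeyBound
/-- non-homogeneous dyadic Journé lemma. Let `μ = μ_n × μ_m`
be an arbitrary product of Borel measures, `Ω` a set of finite measure which is
a union of dyadic rectangles (every point of `Ω` lies in a rectangle inside
`Ω`), and `ω : ℕ → ℝ₊` decreasing with `Σ ω(k) < ∞`. Then
`Σ_{R ⊆ Ω 2-maximal} ω(emb₁(R;Ω)) μ(R) ≤ 2 (Σ_k ω(k)) μ(Ω)`, where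
`emb₁(R;Ω) = sup{kk : R^{(kk,0)} ⊆ Ω̃}`; since `ω` is decreasing and the set
`{kk : R^{(kk,0)} ⊆ Ω̃}` is an initial segment of `ℕ`, the value
`ω(emb₁(R;Ω))` is expressed as `⨅_{kk : R^{(kk,0)} ⊆ Ω̃} ω(kk)`. -/
theorem stmt12 {n m : ℕ} (hn : 0 < n) (hm : 0 < m)
    (μn : Measure (Fin n → ℝ)) (μm : Measure (Fin m → ℝ)) [SFinite μn] [SFinite μm]
    (Ω : Set ((Fin n → ℝ) × (Fin m → ℝ)))
    (hΩfin : μn.prod μm Ω < ⊤)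
    (hΩcov : ∀ x ∈ Ω, ∃ (k : ℤ) (j : Fin n → ℤ) (l : ℤ) (i : Fin m → ℤ),
      x ∈ dyRect n m k j l i ∧ dyRect n m k j l i ⊆ Ω)
    (ω : ℕ → ℝ) (hωpos : ∀ k, 0 ≤ ω k) (hωdec : ∀ k l, k ≤ l → ω l ≤ ω k)
    (hωsum : Summable ω) :
    (∑' R : {R : (ℤ × (Fin n → ℤ)) × (ℤ × (Fin m → ℤ)) //
        TwoMaximal Ω R.1.1 R.1.2 R.2.1 R.2.2},
      ENNReal.ofReal
          (⨅ kk : {kk : ℕ //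
              ancRect n m R.1.1.1 R.1.1.2 R.1.2.1 R.1.2.2 kk ⊆ tildeSet μn μm Ω},
            ω kk.1) *
        μn.prod μm (dyRect n m R.1.1.1 R.1.1.2 R.1.2.1 R.1.2.2)) ≤
      2 * ENNReal.ofReal (∑' k, ω k) * μn.prod μm Ω := by
  classical
  set μ := μn.prod μm with hμ
  set Δ : ℕ → ENNReal := fun kk => ENNReal.ofReal (ω kk - ω (kk+1)) with hΔ
  set bad : ℕ → Set (Idx n m) := fun kk =>
    {S : Idx n m | ¬ ancRect n m S.1.1 S.1.2 S.2.1 S.2.2 (kk+1) ⊆ tildeSet μn μm Ω} with hbad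
  have hterm : ∀ R : {R : (ℤ × (Fin n → ℤ)) × (ℤ × (Fin m → ℤ)) //
      TwoMaximal Ω R.1.1 R.1.2 R.2.1 R.2.2},
      ENNReal.ofReal
          (⨅ kk : {kk : ℕ //
              ancRect n m R.val.1.1 R.val.1.2 R.val.2.1 R.val.2.2 kk ⊆ tildeSet μn μm Ω},
            ω kk.1)
        ≤ ∑' kk : ℕ, (if R.val ∈ bad kk then Δ kk else 0) := by
    intro R
    set T : Set ℕ :=
      {kk : ℕ | ancRect n m R.val.1.1 R.val.1.2 R.val.2.1 R.val.2.2 kk ⊆ tildeSet μn μm Ω}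
      with hT
    have hbdd : BddBelow (Set.range fun kk : {kk : ℕ //
        ancRect n m R.val.1.1 R.val.1.2 R.val.2.1 R.val.2.2 kk ⊆ tildeSet μn μm Ω} => ω kk.1) := by
      refine ⟨0, ?_⟩
      rintro y ⟨kk, rfl⟩
      exact hωpos _
    by_cases hne : Nonempty {kk : ℕ //
        ancRect n m R.val.1.1 R.val.1.2 R.val.2.1 R.val.2.2 kk ⊆ tildeSet μn μm Ω}
    · by_cases hunb : ∀ N : ℕ, ∃ kk, N ≤ kk ∧
          ancRect n m R.val.1.1 R.val.1.2 R.val.2.1 R.val.2.2 kk ⊆ tildeSet μn μm Ω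
      · have hc0 : (⨅ kk : {kk : ℕ //
            ancRect n m R.val.1.1 R.val.1.2 R.val.2.1 R.val.2.2 kk ⊆ tildeSet μn μm Ω},
            ω kk.1) ≤ 0 := by
          refine ge_of_tendsto hωsum.tendsto_atTop_zero ?_
          refine Filter.Eventually.of_forall fun N => ?_
          obtain ⟨kk, hNkk, hkkT⟩ := hunb N
          exact le_trans (ciInf_le hbdd ⟨kk, hkkT⟩) (hωdec N kk hNkk)
        rw [ENNReal.ofReal_eq_zero.mpr hc0]
        exact zero_le
      · push_neg at hunb
        obtain ⟨N, hN⟩ := hunb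
        obtain ⟨⟨kk0, hkk0⟩⟩ := hne
        have hinT : ∀ kk, kk ∈ T → kk ≤ N := by
          intro kk hkk
          by_contra hcon
          exact hN kk (by omega) hkk
        set e := Nat.findGreatest (· ∈ T) N with he'
        have he : e ∈ T := Nat.findGreatest_spec (hinT kk0 hkk0) hkk0
        have hmax : ∀ kk ∈ T, kk ≤ e := fun kk hkk =>
          Nat.le_findGreatest (hinT kk hkk) hkk
        have hle : (⨅ kk : {kk : ℕ //
            ancRect n m R.val.1.1 R.val.1.2 R.val.2.1 R.val.2.2 kk ⊆ tildeSet μn μm Ω},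
            ω kk.1) ≤ ω e := ciInf_le hbdd ⟨e, he⟩
        refine le_trans (ENNReal.ofReal_le_ofReal hle)
          (le_trans (L1 ω hωpos hωdec hωsum e) ?_)
        refine ENNReal.tsum_le_tsum fun kk => ?_
        by_cases hcase : e ≤ kk
        · rw [if_pos hcase]
          have hmem : R.val ∈ bad kk := by
            intro hsub
            have : kk + 1 ≤ e := hmax _ hsub
            omega
          rw [if_pos hmem]
        · rw [if_neg hcase]
          exact zero_le
    · haveI := not_nonempty_iff.mp hne
      rw [Real.iInf_of_isEmpty, ENNReal.ofReal_zero]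
      exact zero_le
  calc (∑' R : {R : (ℤ × (Fin n → ℤ)) × (ℤ × (Fin m → ℤ)) //
        TwoMaximal Ω R.1.1 R.1.2 R.2.1 R.2.2},
      ENNReal.ofReal
          (⨅ kk : {kk : ℕ //
              ancRect n m R.1.1.1 R.1.1.2 R.1.2.1 R.1.2.2 kk ⊆ tildeSet μn μm Ω},
            ω kk.1) *
        μ (dyRect n m R.1.1.1 R.1.1.2 R.1.2.1 R.1.2.2))
      ≤ ∑' R : {R : (ℤ × (Fin n → ℤ)) × (ℤ × (Fin m → ℤ)) //
          TwoMaximal Ω R.1.1 R.1.2 R.2.1 R.2.2},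
        (∑' kk : ℕ, (if R.val ∈ bad kk then Δ kk else 0))
          * μ (dyRect n m R.val.1.1 R.val.1.2 R.val.2.1 R.val.2.2) :=
        ENNReal.tsum_le_tsum fun R => mul_le_mul_left (hterm R) _
    _ = ∑' R : {R : (ℤ × (Fin n → ℤ)) × (ℤ × (Fin m → ℤ)) //
          TwoMaximal Ω R.1.1 R.1.2 R.2.1 R.2.2},
        ∑' kk : ℕ, (if R.val ∈ bad kk then Δ kk else 0)
          * μ (dyRect n m R.val.1.1 R.val.1.2 R.val.2.1 R.val.2.2) :=
        tsum_congr fun R => ENNReal.tsum_mul_right.symm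
    _ = ∑' kk : ℕ, ∑' R : {R : (ℤ × (Fin n → ℤ)) × (ℤ × (Fin m → ℤ)) //
          TwoMaximal Ω R.1.1 R.1.2 R.2.1 R.2.2},
        (if R.val ∈ bad kk then Δ kk else 0)
          * μ (dyRect n m R.val.1.1 R.val.1.2 R.val.2.1 R.val.2.2) := ENNReal.tsum_comm
    _ = ∑' kk : ℕ, Δ kk * ∑' R : {R : (ℤ × (Fin n → ℤ)) × (ℤ × (Fin m → ℤ)) //
          TwoMaximal Ω R.1.1 R.1.2 R.2.1 R.2.2},
        ((bad kk).indicator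
          (fun S => μ (dyRect n m S.1.1 S.1.2 S.2.1 S.2.2)) R.val) := by
        refine tsum_congr fun kk => ?_
        rw [← ENNReal.tsum_mul_left]
        refine tsum_congr fun R => ?_
        by_cases hb : R.val ∈ bad kk
        · rw [if_pos hb, Set.indicator_of_mem hb]
        · rw [if_neg hb, Set.indicator_of_notMem hb, zero_mul, mul_zero]
    _ ≤ ∑' kk : ℕ, Δ kk * (2 * ((kk : ENNReal) + 1) * μ Ω) :=
        ENNReal.tsum_le_tsum fun kk =>
          mul_le_mul_right (keyBound hn hm hΩfin kk) _
    _ = 2 * μ Ω * ∑' kk : ℕ, ((kk : ENNReal) + 1) * Δ kk := by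
        rw [← ENNReal.tsum_mul_left]
        exact tsum_congr fun kk => by ring
    _ ≤ 2 * μ Ω * ENNReal.ofReal (∑' k, ω k) :=
        mul_le_mul_right (L2 ω hωpos hωdec hωsum) _
    _ = 2 * ENNReal.ofReal (∑' k, ω k) * μ Ω := by ring
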